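/- For every natural number n > 2, we have 3^n - 2·2^n + 2 > 3^(n-1). -/

import Mathlib

lemma aux_pow (n : ℕ) (hn : 2 < n) : (2:ℤ) ^ n ≤ 3 ^ (n - 1) := by
  induction n with
  | zero => omega
  | succ m ih =>
    rcases Nat.lt_or_ge 2 m with h | h
    · have := ih h
      have hm : m - 1 + 1 = m := by omega
      simp only [Nat.succ_sub_one]
      calc (2:ℤ) ^ (m+1) = 2 * 2 ^ m := by ring
        _ ≤ 3 * 3 ^ (m-1) := by nlinarith [pow_pos (show (0:ℤ) < 2 by norm_num) m, pow_pos (show (0:ℤ) < 3 by norm_num) (m-1)]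
        _ = 3 ^ (m-1+1) := by ring
        _ = 3 ^ m := by rw [hm]
    · interval_cases m <;> simp_all

theorem stmt_0 (n : ℕ) (hn : 2 < n) :
    (3 : ℤ) ^ n - 2 * 2 ^ n + 2 > 3 ^ (n - 1) := by
  have h1 := aux_pow n hn
  have hn1 : n - 1 + 1 = n := by omega
  have h2 : (3:ℤ) ^ n = 3 * 3 ^ (n-1) := by
    rw [← pow_succ', hn1]
  nlinarith [pow_pos (show (0:ℤ) < 3 by norm_num) (n-1)]
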